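/- Let G_ℤ = H ⋊ ℤ as above with P satisfying (S1)–(S4). Then for any element h̄t^n ∈ G_ℤ with |n| > 1, the word norm of h̄t^n with respect to the conjugacy closure of S = H₀ ∪ {t^{±1}} equals |n|. -/
import Mathlib


variable (P : Type) [Group P]

/-- Finitely supported functions `ℤ → P`, as a subgroup of the full product. -/
def Hgrp : Subgroup (ℤ → P) where
  carrier := {f | (Function.mulSupport f).Finite}
  one_mem' := by simp [Function.mulSupport_one]
  mul_mem' := by
    intro a b ha hb
    exact (ha.union hb).subset (Function.mulSupport_mul a b)
  inv_mem' := by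
    intro a ha
    simpa [Function.mulSupport_inv] using ha

/-- The one-step shift automorphism of `Hgrp P`. -/
def shiftAut : MulAut (Hgrp P) where
  toFun f := ⟨fun i => f.1 (i + 1), by
    have : Function.mulSupport (fun i : ℤ => f.1 (i + 1)) ⊆
        (fun i : ℤ => i - 1) '' Function.mulSupport f.1 := by
      intro i hi
      exact ⟨i + 1, hi, by ring⟩
    exact (f.2.image _).subset this⟩
  invFun f := ⟨fun i => f.1 (i - 1), by
    have : Function.mulSupport (fun i : ℤ => f.1 (i - 1)) ⊆
        (fun i : ℤ => i + 1) '' Function.mulSupport f.1 := by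
      intro i hi
      exact ⟨i - 1, hi, by ring⟩
    exact (f.2.image _).subset this⟩
  left_inv f := by ext i; simp
  right_inv f := by ext i; simp
  map_mul' f g := rfl

/-- The wreath-type group `G_ℤ = H ⋊ ℤ`. -/
abbrev GZ : Type :=
  Hgrp P ⋊[zpowersHom (MulAut (Hgrp P)) (shiftAut P)] Multiplicative ℤ

/-- The element `t = (1,1)` of `G_ℤ`. -/
def tElt : GZ P := SemidirectProduct.inr (Multiplicative.ofAdd 1)

/-- The element of `Hgrp P` supported at `i` with value `h`. -/
def singleAt (i : ℤ) (h : P) : Hgrp P :=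
  ⟨fun j => if j = i then h else 1, by
    apply Set.Finite.subset (Set.finite_singleton i)
    intro j hj
    by_contra hne
    simp only [Set.mem_singleton_iff] at hne
    exact hj (if_neg hne)⟩

open Pointwise

section AuxWreath

variable {P : Type} [Group P]

/-- Ordered partial product `f j * f (j+1) * ... * f (N-1)`. -/
def auxB (N : ℤ) (f : ℤ → P) : ℤ → P := fun j =>
  ((List.range (N - j).toNat).map (fun k : ℕ => f (j + (k : ℤ)))).prod

lemma auxB_eq_one {N : ℤ} {f : ℤ → P} {j : ℤ} (hj : N ≤ j) : auxB N f j = 1 := by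
  unfold auxB
  have h0 : (N - j).toNat = 0 := by omega
  rw [h0]
  simp

lemma auxB_step {N : ℤ} {f : ℤ → P} (hf : ∀ i, N ≤ i → f i = 1) (j : ℤ) :
    auxB N f j = f j * auxB N f (j + 1) := by
  by_cases hj : N ≤ j
  · rw [auxB_eq_one hj, auxB_eq_one (by omega), hf j hj, mul_one]
  · have hm : (N - j).toNat = (N - (j + 1)).toNat + 1 := by omega
    show ((List.range (N - j).toNat).map (fun k : ℕ => f (j + (k : ℤ)))).prod = _
    rw [hm, List.range_succ_eq_map]
    rw [List.map_cons, List.prod_cons, List.map_map]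
    have h0 : f (j + ((0 : ℕ) : ℤ)) = f j := by norm_num
    have h1 : ((fun k : ℕ => f (j + (k : ℤ))) ∘ Nat.succ)
        = fun k : ℕ => f ((j + 1) + (k : ℤ)) := by
      funext k
      simp only [Function.comp_apply]
      congr 1
      push_cast
      ring
    rw [h0, h1]
    rfl

/-- `t * inl a = inl (shift a) * t` in `G_ℤ`. -/
lemma t_mul_inl (a : Hgrp P) :
    tElt P * SemidirectProduct.inl a = SemidirectProduct.inl (shiftAut P a) * tElt P := by
  have h := SemidirectProduct.inl_aut (φ := zpowersHom (MulAut (Hgrp P)) (shiftAut P))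
    (Multiplicative.ofAdd (1 : ℤ)) a
  have hφ : (zpowersHom (MulAut (Hgrp P)) (shiftAut P)) (Multiplicative.ofAdd (1 : ℤ)) a
      = shiftAut P a := by
    rw [zpowersHom_apply]
    norm_num
  rw [hφ] at h
  rw [tElt, h]
  simp only [mul_assoc, ← map_mul, inv_mul_cancel, map_one, mul_one]

/-- `inr u * inl a = inl (shift^u a) * inr u` in `G_ℤ`. -/
lemma inr_mul_inl' (u : Multiplicative ℤ) (a : Hgrp P) :
    SemidirectProduct.inr (φ := zpowersHom (MulAut (Hgrp P)) (shiftAut P)) u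
        * SemidirectProduct.inl a
      = SemidirectProduct.inl ((zpowersHom (MulAut (Hgrp P)) (shiftAut P)) u a)
        * SemidirectProduct.inr u := by
  rw [SemidirectProduct.inl_aut u a]
  simp only [mul_assoc, ← map_mul, inv_mul_cancel, map_one, mul_one]

lemma conj_t_eq (f : Hgrp P) :
    SemidirectProduct.inl f * tElt P * (SemidirectProduct.inl f)⁻¹
      = SemidirectProduct.inl (f * (shiftAut P f)⁻¹) * tElt P := by
  rw [← map_inv, mul_assoc, t_mul_inl, ← mul_assoc, ← map_mul, map_inv]

lemma tElt_pow (m : ℕ) :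
    tElt P ^ m = SemidirectProduct.inr (φ := zpowersHom (MulAut (Hgrp P)) (shiftAut P))
      (Multiplicative.ofAdd (m : ℤ)) := by
  rw [tElt, ← map_pow]
  congr 1
  induction m with
  | zero => simp
  | succ k ih =>
      rw [pow_succ, ih, ← ofAdd_add]
      push_cast
      ring_nf

/-- Key combinatorial lemma: assuming (S1), every element of `⊕ P` is a product
of two "coboundaries" `v * (α v)⁻¹`. -/
lemma exists_vw (hS1 : ∀ a₁ a₂ : P, ∃ x y : P, a₂ = x⁻¹ * a₁⁻¹ * y * x * y⁻¹)
    (h : Hgrp P) :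
    ∃ v w : Hgrp P, h = v * (shiftAut P v)⁻¹ * (w * (shiftAut P w)⁻¹) := by
  have hfin : (Function.mulSupport h.1).Finite := h.2
  obtain ⟨N, hN⟩ : ∃ N : ℤ, ∀ j, N ≤ j → h.1 j = 1 := by
    obtain ⟨N, hN⟩ := hfin.bddAbove
    refine ⟨N + 1, fun j hj => ?_⟩
    by_contra hne
    have := hN (Function.mem_mulSupport.2 hne)
    omega
  obtain ⟨L₀, hL₀⟩ : ∃ L : ℤ, ∀ j, j ≤ L → h.1 j = 1 := by
    obtain ⟨L, hL⟩ := hfin.bddBelow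
    refine ⟨L - 1, fun j hj => ?_⟩
    by_contra hne
    have := hL (Function.mem_mulSupport.2 hne)
    omega
  set L : ℤ := min L₀ N with hLdef
  have hL : ∀ j, j ≤ L → h.1 j = 1 := fun j hj => hL₀ j (by omega)
  have hLN : L ≤ N := by omega
  obtain ⟨x, y, hxy⟩ := hS1 1 (auxB N h.1 (L + 1))
  set vf : ℤ → P := fun j => if j = L then x⁻¹ else if j = L - 1 then y else 1 with hvf
  set wf : ℤ → P := fun j =>
    if L + 1 ≤ j then auxB N h.1 j
    else if j = L then y * x * y⁻¹
    else if j = L - 1 then y⁻¹ else 1 with hwf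
  have hvmem : vf ∈ Hgrp P := by
    show (Function.mulSupport vf).Finite
    apply Set.Finite.subset ((Set.finite_singleton (L - 1)).insert L)
    intro j hj
    rcases eq_or_ne j L with rfl | h1
    · exact Set.mem_insert _ _
    rcases eq_or_ne j (L - 1) with rfl | h2
    · exact Set.mem_insert_of_mem _ rfl
    exfalso
    apply hj
    show vf j = 1
    rw [hvf]
    simp only [if_neg h1, if_neg h2]
  have hwmem : wf ∈ Hgrp P := by
    show (Function.mulSupport wf).Finite
    apply Set.Finite.subset (Set.finite_Icc (L - 1) N)
    intro j hj
    rw [Set.mem_Icc]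
    by_cases hb : L + 1 ≤ j
    · refine ⟨by omega, ?_⟩
      by_contra hNj
      push_neg at hNj
      apply hj
      show wf j = 1
      rw [hwf]
      simp only [if_pos hb]
      exact auxB_eq_one (by omega)
    · rcases eq_or_ne j L with rfl | h1
      · exact ⟨by omega, by omega⟩
      rcases eq_or_ne j (L - 1) with rfl | h2
      · exact ⟨by omega, by omega⟩
      exfalso
      apply hj
      show wf j = 1
      rw [hwf]
      simp only [if_neg hb, if_neg h1, if_neg h2]
  refine ⟨⟨vf, hvmem⟩, ⟨wf, hwmem⟩, ?_⟩
  apply Subtype.ext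
  funext j
  show h.1 j = vf j * (vf (j + 1))⁻¹ * (wf j * (wf (j + 1))⁻¹)
  by_cases c1 : L + 1 ≤ j
  · have e1 : vf j = 1 := by
      rw [hvf]; simp only [if_neg (by omega : ¬ j = L), if_neg (by omega : ¬ j = L - 1)]
    have e2 : vf (j + 1) = 1 := by
      rw [hvf]; simp only [if_neg (by omega : ¬ j + 1 = L), if_neg (by omega : ¬ j + 1 = L - 1)]
    have e3 : wf j = auxB N h.1 j := by rw [hwf]; simp only [if_pos c1]
    have e4 : wf (j + 1) = auxB N h.1 (j + 1) := by
      rw [hwf]; simp only [if_pos (by omega : L + 1 ≤ j + 1)]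
    rw [e1, e2, e3, e4, auxB_step hN j]
    group
  by_cases c2 : j = L
  · have e1 : vf j = x⁻¹ := by rw [hvf]; simp only [if_pos c2]
    have e2 : vf (j + 1) = 1 := by
      rw [hvf]; simp only [if_neg (by omega : ¬ j + 1 = L), if_neg (by omega : ¬ j + 1 = L - 1)]
    have e3 : wf j = y * x * y⁻¹ := by
      rw [hwf]; simp only [if_neg (by omega : ¬ L + 1 ≤ j), if_pos c2]
    have e4 : wf (j + 1) = auxB N h.1 (L + 1) := by
      rw [hwf]
      simp only [if_pos (by omega : L + 1 ≤ j + 1)]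
      rw [show j + 1 = L + 1 by omega]
    rw [e1, e2, e3, e4, hL j (by omega), hxy]
    group
  by_cases c3 : j = L - 1
  · have e1 : vf j = y := by
      rw [hvf]; simp only [if_neg (by omega : ¬ j = L), if_pos c3]
    have e2 : vf (j + 1) = x⁻¹ := by
      rw [hvf]; simp only [if_pos (by omega : j + 1 = L)]
    have e3 : wf j = y⁻¹ := by
      rw [hwf]
      simp only [if_neg (by omega : ¬ L + 1 ≤ j), if_neg (by omega : ¬ j = L), if_pos c3]
    have e4 : wf (j + 1) = y * x * y⁻¹ := by
      rw [hwf]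
      simp only [if_neg (by omega : ¬ L + 1 ≤ j + 1), if_pos (by omega : j + 1 = L)]
    rw [e1, e2, e3, e4, hL j (by omega)]
    group
  by_cases c4 : j = L - 2
  · have e1 : vf j = 1 := by
      rw [hvf]; simp only [if_neg (by omega : ¬ j = L), if_neg (by omega : ¬ j = L - 1)]
    have e2 : vf (j + 1) = y := by
      rw [hvf]; simp only [if_neg (by omega : ¬ j + 1 = L), if_pos (by omega : j + 1 = L - 1)]
    have e3 : wf j = 1 := by
      rw [hwf]
      simp only [if_neg (by omega : ¬ L + 1 ≤ j), if_neg (by omega : ¬ j = L),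
        if_neg (by omega : ¬ j = L - 1)]
    have e4 : wf (j + 1) = y⁻¹ := by
      rw [hwf]
      simp only [if_neg (by omega : ¬ L + 1 ≤ j + 1), if_neg (by omega : ¬ j + 1 = L),
        if_pos (by omega : j + 1 = L - 1)]
    rw [e1, e2, e3, e4, hL j (by omega)]
    group
  · have e1 : vf j = 1 := by rw [hvf]; simp only [if_neg c2, if_neg c3]
    have e2 : vf (j + 1) = 1 := by
      rw [hvf]; simp only [if_neg (by omega : ¬ j + 1 = L), if_neg (by omega : ¬ j + 1 = L - 1)]
    have e3 : wf j = 1 := by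
      rw [hwf]; simp only [if_neg (by omega : ¬ L + 1 ≤ j), if_neg c2, if_neg c3]
    have e4 : wf (j + 1) = 1 := by
      rw [hwf]
      simp only [if_neg (by omega : ¬ L + 1 ≤ j + 1), if_neg (by omega : ¬ j + 1 = L),
        if_neg (by omega : ¬ j + 1 = L - 1)]
    rw [e1, e2, e3, e4, hL j (by omega)]
    group

end AuxWreath


/-- For `P` finite satisfying (S1)–(S4), the word norm on `G_ℤ` (w.r.t. the
conjugacy closure of `S = H₀ ∪ {t^{±1}}`) of any element `h̄ t^n` with
`|n| > 1` equals `|n|`. -/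
theorem stmt_16 [Finite P]
    (hS1 : ∀ a₁ a₂ : P, ∃ x y : P, a₂ = x⁻¹ * a₁⁻¹ * y * x * y⁻¹)
    (hS2 : ∀ a₁ a₂ a₃ : P, ∃ u v : P,
      a₂ = a₃ * u * a₁⁻¹ * a₃⁻¹ * v * u⁻¹ * v⁻¹)
    (hS3 : ∀ u₁ u₂ u₃ u₄ : P, u₁ ≠ 1 → u₂ ≠ 1 → u₃ ≠ 1 → u₄ ≠ 1 →
      ∃ x y z : P, u₄ = x⁻¹ * u₁ * x * (y⁻¹ * u₂ * y) * (z⁻¹ * u₃ * z))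
    (hS4 : ∃ u₁ u₂ u₃ : P, u₁ ≠ 1 ∧ u₂ ≠ 1 ∧ u₃ ≠ 1 ∧
      ¬ ∃ x y : P, u₃ = x⁻¹ * u₂⁻¹ * x * (y⁻¹ * u₁⁻¹ * y))
    (S : Set (GZ P))
    (hS : S = {x : GZ P | ∃ h : P, x = SemidirectProduct.inl (singleAt P 0 h)} ∪
      {tElt P, (tElt P)⁻¹})
    (Sbar : Set (GZ P))
    (hSbar : Sbar = {x : GZ P | ∃ s ∈ S, ∃ g : GZ P, g * s * g⁻¹ = x})
    (h : Hgrp P) (n : ℤ) (hn : 1 < |n|) :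
    IsLeast {k : ℕ |
      SemidirectProduct.inl h * SemidirectProduct.inr (Multiplicative.ofAdd n)
        ∈ Sbar ^ k} n.natAbs := by
  have habs : 1 < (n.natAbs : ℤ) := by rwa [Int.abs_eq_natAbs] at hn
  have htS : tElt P ∈ S := by
    rw [hS]; exact Set.mem_union_right _ (Set.mem_insert _ _)
  have hconj_mem : ∀ s ∈ S, ∀ g : GZ P, g * s * g⁻¹ ∈ Sbar := by
    intro s hs g
    rw [hSbar]
    exact ⟨s, hs, g, rfl⟩
  have ht : tElt P ∈ Sbar := by
    have := hconj_mem _ htS 1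
    simpa using this
  have hSbarInv : ∀ x ∈ Sbar, x⁻¹ ∈ Sbar := by
    intro x hx
    rw [hSbar] at hx ⊢
    obtain ⟨s, hsS, g, rfl⟩ := hx
    refine ⟨s⁻¹, ?_, g, by group⟩
    rw [hS] at hsS ⊢
    rcases hsS with hl | hr
    · obtain ⟨p, rfl⟩ := hl
      left
      refine ⟨p⁻¹, ?_⟩
      rw [← map_inv]
      congr 1
      apply Subtype.ext
      funext j
      show (if j = 0 then p else 1)⁻¹ = (if j = 0 then p⁻¹ else 1)
      split_ifs <;> simp
    · right
      rcases hr with rfl | hr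
      · exact Set.mem_insert_of_mem _ rfl
      · rw [Set.mem_singleton_iff] at hr
        subst hr
        rw [inv_inv]
        exact Set.mem_insert _ _
  have posCase : ∀ (m : ℕ) (h' : Hgrp P),
      SemidirectProduct.inl h' * SemidirectProduct.inr (Multiplicative.ofAdd ((m : ℤ) + 2))
        ∈ Sbar ^ (m + 2) := by
    intro m h'
    obtain ⟨v, w, hvw⟩ := exists_vw hS1 h'
    set v' : Hgrp P := (shiftAut P).symm w with hv'
    have hα : shiftAut P v' = w := (shiftAut P).apply_symm_apply w
    have h1 : tElt P * SemidirectProduct.inl (v' * (shiftAut P v')⁻¹)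
        = SemidirectProduct.inl (w * (shiftAut P w)⁻¹) * tElt P := by
      rw [t_mul_inl, map_mul, map_inv, hα]
    have hfact :
        (SemidirectProduct.inl v * tElt P * (SemidirectProduct.inl v)⁻¹)
          * (SemidirectProduct.inl v' * tElt P * (SemidirectProduct.inl v')⁻¹)
          * tElt P ^ m
        = SemidirectProduct.inl h'
            * SemidirectProduct.inr (Multiplicative.ofAdd ((m : ℤ) + 2)) := by
      rw [conj_t_eq v, conj_t_eq v']
      calc SemidirectProduct.inl (v * (shiftAut P v)⁻¹) * tElt P *
            (SemidirectProduct.inl (v' * (shiftAut P v')⁻¹) * tElt P) * tElt P ^ m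
          = SemidirectProduct.inl (v * (shiftAut P v)⁻¹) *
            (tElt P * SemidirectProduct.inl (v' * (shiftAut P v')⁻¹)) *
            (tElt P * tElt P ^ m) := by
            group
        _ = SemidirectProduct.inl (v * (shiftAut P v)⁻¹) *
            (SemidirectProduct.inl (w * (shiftAut P w)⁻¹) * tElt P) *
            (tElt P * tElt P ^ m) := by rw [h1]
        _ = SemidirectProduct.inl (v * (shiftAut P v)⁻¹ * (w * (shiftAut P w)⁻¹)) *
            tElt P ^ (m + 2) := by
            rw [show m + 2 = (m + 1) + 1 from rfl, pow_succ', pow_succ']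
            simp only [map_mul, map_inv]
            group
        _ = SemidirectProduct.inl h'
            * SemidirectProduct.inr (Multiplicative.ofAdd ((m : ℤ) + 2)) := by
            rw [← hvw, tElt_pow]
            norm_num
    rw [← hfact]
    have hsplit : Sbar ^ (m + 2) = Sbar * Sbar * Sbar ^ m := by
      rw [show m + 2 = 2 + m by omega, pow_add, sq]
    rw [hsplit]
    exact Set.mul_mem_mul
      (Set.mul_mem_mul (hconj_mem _ htS (SemidirectProduct.inl v))
        (hconj_mem _ htS (SemidirectProduct.inl v')))
      (Set.pow_mem_pow ht : tElt P ^ m ∈ Sbar ^ m)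
  have hpowInv : ∀ (k : ℕ) (g : GZ P), g ∈ Sbar ^ k → g⁻¹ ∈ Sbar ^ k := by
    intro k
    induction k with
    | zero =>
        intro g hg
        rw [pow_zero, Set.mem_one] at hg ⊢
        rw [hg, inv_one]
    | succ k ih =>
        intro g hg
        rw [pow_succ, Set.mem_mul] at hg
        obtain ⟨a, ha, b, hb, rfl⟩ := hg
        rw [mul_inv_rev, pow_succ']
        exact Set.mul_mem_mul (hSbarInv b hb) (ih a ha)
  constructor
  · show SemidirectProduct.inl h * SemidirectProduct.inr (Multiplicative.ofAdd n)
      ∈ Sbar ^ n.natAbs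
    rcases le_or_gt 0 n with hpos | hneg
    · have hmz : ((n.natAbs - 2 : ℕ) : ℤ) + 2 = n := by omega
      have hm : n.natAbs = (n.natAbs - 2) + 2 := by omega
      rw [hm]
      have := posCase (n.natAbs - 2) h
      rw [hmz] at this
      exact this
    · have hEinv : (SemidirectProduct.inl h * SemidirectProduct.inr (Multiplicative.ofAdd n))⁻¹
          = (SemidirectProduct.inl
              ((zpowersHom (MulAut (Hgrp P)) (shiftAut P)) (Multiplicative.ofAdd (-n)) h⁻¹)
            * SemidirectProduct.inr (Multiplicative.ofAdd (-n)) : GZ P) := by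
        have e1 : (SemidirectProduct.inr (Multiplicative.ofAdd n) : GZ P)⁻¹
            = SemidirectProduct.inr (Multiplicative.ofAdd (-n)) := by
          rw [← map_inv, ← ofAdd_neg]
        have e2 : (SemidirectProduct.inl h : GZ P)⁻¹ = SemidirectProduct.inl h⁻¹ :=
          (map_inv _ _).symm
        rw [mul_inv_rev, e1, e2, inr_mul_inl']
      have hmem_inv : (SemidirectProduct.inl h
          * SemidirectProduct.inr (Multiplicative.ofAdd n))⁻¹ ∈ Sbar ^ n.natAbs := by
        have hmz : ((n.natAbs - 2 : ℕ) : ℤ) + 2 = -n := by omega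
        have hm : n.natAbs = (n.natAbs - 2) + 2 := by omega
        rw [hEinv, hm]
        have := posCase (n.natAbs - 2)
          ((zpowersHom (MulAut (Hgrp P)) (shiftAut P)) (Multiplicative.ofAdd (-n)) h⁻¹)
        rw [hmz] at this
        exact this
      have := hpowInv _ _ hmem_inv
      simpa using this
  · intro k hk
    have hk' : SemidirectProduct.inl h * SemidirectProduct.inr (Multiplicative.ofAdd n)
        ∈ Sbar ^ k := hk
    have single : ∀ x ∈ Sbar,
        (Multiplicative.toAdd (SemidirectProduct.rightHom x)).natAbs ≤ 1 := by
      intro x hx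
      rw [hSbar] at hx
      obtain ⟨s, hsS, g, rfl⟩ := hx
      have hπ : SemidirectProduct.rightHom (g * s * g⁻¹)
          = SemidirectProduct.rightHom s := by
        rw [map_mul, map_mul, map_inv, mul_comm (SemidirectProduct.rightHom g),
          mul_assoc, mul_inv_cancel, mul_one]
      rw [hπ]
      rw [hS] at hsS
      rcases hsS with hl | hr
      · obtain ⟨p, rfl⟩ := hl
        rw [SemidirectProduct.rightHom_inl]
        simp
      · rcases hr with rfl | hr
        · rw [tElt, SemidirectProduct.rightHom_inr]
          simp
        · rw [Set.mem_singleton_iff] at hr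
          subst hr
          rw [map_inv, tElt, SemidirectProduct.rightHom_inr]
          simp
    have key : ∀ (k : ℕ) (g : GZ P), g ∈ Sbar ^ k →
        (Multiplicative.toAdd (SemidirectProduct.rightHom g)).natAbs ≤ k := by
      intro k
      induction k with
      | zero =>
          intro g hg
          rw [pow_zero, Set.mem_one] at hg
          rw [hg]
          simp
      | succ k ih =>
          intro g hg
          rw [pow_succ, Set.mem_mul] at hg
          obtain ⟨a, ha, b, hb, rfl⟩ := hg
          rw [map_mul, toAdd_mul]
          have h1 := ih a ha
          have h2 := single b hb
          have h3 := Int.natAbs_add_le (Multiplicative.toAdd (SemidirectProduct.rightHom a))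
            (Multiplicative.toAdd (SemidirectProduct.rightHom b))
          omega
    have hfin := key k _ hk'
    have hπE : SemidirectProduct.rightHom (φ := zpowersHom (MulAut (Hgrp P)) (shiftAut P))
        (SemidirectProduct.inl h * SemidirectProduct.inr (Multiplicative.ofAdd n))
        = Multiplicative.ofAdd n := by
      rw [map_mul, SemidirectProduct.rightHom_inl, SemidirectProduct.rightHom_inr, one_mul]
    rw [hπE] at hfin
    simpa using hfin
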